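/- Let g be a Lie algebra with zero center and suppose D ∈ Der(g) satisfies [D, Der(g)] ⊆ ad(g). Define x_d ∈ g by [D,d] = ad_{x_d} for each d ∈ Der(g). Then the map D' : h(g) → h(g) given by D'|_g = 0 and D'(d) = x_d − ad_{x_d} is a derivation of the holomorph h(g). -/

import Mathlib

section HolomorphDef

variable (K : Type*) (L : Type*) [Field K] [LieRing L] [LieAlgebra K L]

/-- The bracket `[(x,d),(y,e)] = ([x,y] + d(y) - e(x), [d,e])` on `g ⊕ Der(g)`. -/
def holoBracket (h h' : L × LieDerivation K L L) : L × LieDerivation K L L :=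
  (⁅h.1, h'.1⁆ + h.2 h'.1 - h'.2 h.1, ⁅h.2, h'.2⁆)

variable {K L}

lemma holoBracket_add_left (x y z : L × LieDerivation K L L) :
    holoBracket K L (x + y) z = holoBracket K L x z + holoBracket K L y z := by
  simp only [holoBracket, Prod.ext_iff, Prod.fst_add, Prod.snd_add, add_lie,
    LieDerivation.coe_add, Pi.add_apply, map_add]
  constructor
  · abel
  · simp [add_lie]

lemma holoBracket_add_right (x y z : L × LieDerivation K L L) :
    holoBracket K L x (y + z) = holoBracket K L x y + holoBracket K L x z := by
  simp only [holoBracket, Prod.ext_iff, Prod.fst_add, Prod.snd_add, lie_add,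
    LieDerivation.coe_add, Pi.add_apply, map_add]
  constructor
  · abel
  · simp [lie_add]

lemma holoBracket_self (x : L × LieDerivation K L L) : holoBracket K L x x = 0 := by
  simp [holoBracket, Prod.ext_iff]

lemma holoBracket_leibniz (x y z : L × LieDerivation K L L) :
    holoBracket K L x (holoBracket K L y z) =
      holoBracket K L (holoBracket K L x y) z + holoBracket K L y (holoBracket K L x z) := by
  simp only [holoBracket, Prod.ext_iff, Prod.fst_add, Prod.snd_add,
    LieDerivation.commutator_apply, map_add, map_sub, lie_add, lie_sub, add_lie, sub_lie,
    LieDerivation.apply_lie_eq_add]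
  constructor
  · rw [leibniz_lie x.1 y.1 z.1, ← lie_skew (z.2 x.1) y.1]
    abel
  · rw [leibniz_lie]

lemma holoBracket_smul (t : K) (x y : L × LieDerivation K L L) :
    holoBracket K L x (t • y) = t • holoBracket K L x y := by
  refine Prod.ext ?_ ?_
  · simp [holoBracket, smul_add, smul_sub]
  · exact lie_smul t x.2 y.2

variable (K L)

/-- The holomorph `h(g) = g ⋊ Der(g)` of a Lie algebra `g`: as a vector space it is
the direct sum `g ⊕ Der(g)`. -/
def Holomorph := L × LieDerivation K L L

namespace Holomorph

instance : AddCommGroup (Holomorph K L) :=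
  inferInstanceAs (AddCommGroup (L × LieDerivation K L L))

instance : Module K (Holomorph K L) :=
  inferInstanceAs (Module K (L × LieDerivation K L L))

instance : LieRing (Holomorph K L) where
  bracket h h' := holoBracket K L h h'
  add_lie := holoBracket_add_left
  lie_add := holoBracket_add_right
  lie_self := holoBracket_self
  leibniz_lie := holoBracket_leibniz

instance : LieAlgebra K (Holomorph K L) where
  lie_smul := holoBracket_smul

variable {K L}

/-- The element `(x, d)` (also written `x + d`) of the holomorph. -/
def mk (x : L) (d : LieDerivation K L L) : Holomorph K L := (x, d)

/-- The `g`-component of an element of the holomorph. -/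
def fst (h : Holomorph K L) : L := (show L × LieDerivation K L L from h).1

/-- The `Der(g)`-component of an element of the holomorph. -/
def snd (h : Holomorph K L) : LieDerivation K L L := (show L × LieDerivation K L L from h).2

@[simp] lemma fst_mk (x : L) (d : LieDerivation K L L) : (mk x d).fst = x := rfl
@[simp] lemma snd_mk (x : L) (d : LieDerivation K L L) : (mk x d).snd = d := rfl

lemma ext {h h' : Holomorph K L} (h1 : h.fst = h'.fst) (h2 : h.snd = h'.snd) : h = h' :=
  Prod.ext h1 h2

/-- The bracket of the holomorph is `[(x,d),(y,e)] = ([x,y] + d(y) - e(x), [d,e])`. -/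
lemma bracket_def (x y : L) (d e : LieDerivation K L L) :
    ⁅mk x d, mk y e⁆ = mk (⁅x, y⁆ + d y - e x) ⁅d, e⁆ := rfl

end Holomorph

end HolomorphDef

/-- Let `g` have zero center, and let `D ∈ Der(g)` satisfy `[D, Der(g)] ⊆ ad(g)`,
with `[D, d] = ad_{x_d}` for each `d`.  Then the map determined by vanishing on `g`
and sending `d` to `x_d - ad_{x_d}` is a derivation of the holomorph `h(g)`. -/
theorem holomorph_derivation_of_central_outer (K : Type*) (L : Type*) [Field K] [LieRing L]
    [LieAlgebra K L] (hc : LieAlgebra.center K L = ⊥) (D : LieDerivation K L L)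
    (xd : LieDerivation K L L → L)
    (hxd : ∀ d : LieDerivation K L L, ⁅D, d⁆ = LieDerivation.ad K L (xd d)) :
    ∃ D' : LieDerivation K (Holomorph K L) (Holomorph K L),
      (∀ x : L, D' (Holomorph.mk x 0) = 0) ∧
      ∀ (x : L) (d : LieDerivation K L L),
        D' (Holomorph.mk x d) = Holomorph.mk (xd d) (- LieDerivation.ad K L (xd d)) := by
  have hinj : Function.Injective (LieDerivation.ad K L) :=
    LieDerivation.injective_ad_of_center_eq_bot hc
  have hadd : ∀ d e : LieDerivation K L L, xd (d + e) = xd d + xd e := by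
    intro d e
    apply hinj
    rw [map_add, ← hxd, ← hxd, ← hxd, lie_add]
  have hsmul : ∀ (t : K) (d : LieDerivation K L L), xd (t • d) = t • xd d := by
    intro t d
    apply hinj
    rw [map_smul, ← hxd, ← hxd]; exact lie_smul t D d
  have hzero : xd 0 = 0 := by
    apply hinj
    rw [← hxd, lie_zero, map_zero]
  have key : ∀ d e : LieDerivation K L L, xd ⁅d, e⁆ = d (xd e) - e (xd d) := by
    intro d e
    apply hinj
    rw [← hxd, leibniz_lie, hxd, hxd, LieDerivation.lie_der_ad_eq_ad_der, ← lie_skew,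
      LieDerivation.lie_der_ad_eq_ad_der, map_sub]
    abel
  refine ⟨{ toFun := fun h => Holomorph.mk (xd h.snd) (-(LieDerivation.ad K L (xd h.snd))),
            map_add' := ?_, map_smul' := ?_, leibniz' := ?_ }, ?_, ?_⟩
  · intro a b
    refine Holomorph.ext ?_ ?_
    · show xd (a.snd + b.snd) = xd a.snd + xd b.snd
      exact hadd _ _
    · show -(LieDerivation.ad K L (xd (a.snd + b.snd))) =
        -(LieDerivation.ad K L (xd a.snd)) + -(LieDerivation.ad K L (xd b.snd))
      rw [hadd, map_add, neg_add]
  · intro t a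
    refine Holomorph.ext ?_ ?_
    · show xd (t • a.snd) = t • xd a.snd
      exact hsmul _ _
    · show -(LieDerivation.ad K L (xd (t • a.snd))) = t • -(LieDerivation.ad K L (xd a.snd))
      rw [hsmul, map_smul, smul_neg]
  · intro a b
    refine Holomorph.ext ?_ ?_
    · show xd ⁅a.snd, b.snd⁆ =
        (⁅a.fst, xd b.snd⁆ + a.snd (xd b.snd) - (-(LieDerivation.ad K L (xd b.snd))) a.fst) -
        (⁅b.fst, xd a.snd⁆ + b.snd (xd a.snd) - (-(LieDerivation.ad K L (xd a.snd))) b.fst)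
      rw [key]
      simp only [LieDerivation.neg_apply, LieDerivation.ad_apply_apply, ← lie_skew (xd b.snd),
        ← lie_skew (xd a.snd)]
      abel
    · show -(LieDerivation.ad K L (xd ⁅a.snd, b.snd⁆)) =
        ⁅a.snd, -(LieDerivation.ad K L (xd b.snd))⁆ - ⁅b.snd, -(LieDerivation.ad K L (xd a.snd))⁆
      rw [key, map_sub, lie_neg, lie_neg, LieDerivation.lie_der_ad_eq_ad_der,
        LieDerivation.lie_der_ad_eq_ad_der]
      abel
  · intro x
    refine Holomorph.ext ?_ ?_
    · show xd (Holomorph.mk x 0).snd = (0 : Holomorph K L).fst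
      exact hzero
    · show -(LieDerivation.ad K L (xd (Holomorph.mk x 0).snd)) = (0 : Holomorph K L).snd
      simp [hzero]
      rfl
  · intro x d
    rfl
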